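/- Let X₁, ..., X_k be random variables (not necessarily independent) with ‖X_i‖_{ψ_{α_i}} < ∞ for some α_i ∈ (0,1], and let t = (∑_{i=1}^k α_i^{-1})^{-1}. Then ‖∏_{i=1}^k X_i‖_{ψ_t} ≤ ∏_{i=1}^k ‖X_i‖_{ψ_{α_i}}. -/

import Mathlib

open MeasureTheory ENNReal NNReal

/-- The exponential Orlicz quasi-norm `‖X‖_{ψ_α}`, with `sInf ∅ = ∞`. -/
noncomputable def psiNorm {Ω : Type*} [MeasurableSpace Ω] (μ : Measure Ω) (α : ℝ)
    (X : Ω → ℝ) : ℝ≥0∞ :=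
  sInf {t : ℝ≥0∞ | t ≠ 0 ∧ t ≠ ⊤ ∧
    ∫⁻ ω, ENNReal.ofReal (Real.exp (|X ω| ^ α / t.toReal ^ α)) ∂μ ≤ 2}

/-- Orlicz norm of a product of (not necessarily independent) random variables:
if `‖X i‖_{ψ_{α i}} < ∞` with `α i ∈ (0,1]` and `t = (∑ i, (α i)⁻¹)⁻¹`, then
`‖∏ i, X i‖_{ψ_t} ≤ ∏ i, ‖X i‖_{ψ_{α i}}`. -/
theorem stmt_2 {Ω : Type*} [MeasurableSpace Ω] (μ : Measure Ω) [IsProbabilityMeasure μ]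
    (k : ℕ) (hk : 0 < k) (α : Fin k → ℝ) (hα : ∀ i, α i ∈ Set.Ioc (0 : ℝ) 1)
    (X : Fin k → Ω → ℝ) (hX : ∀ i, Measurable (X i))
    (hfin : ∀ i, psiNorm μ (α i) (X i) ≠ ⊤)
    (t : ℝ) (ht : t = (∑ i, (α i)⁻¹)⁻¹) :
    psiNorm μ t (fun ω => ∏ i, X i ω) ≤ ∏ i, psiNorm μ (α i) (X i) := by
  classical
  haveI : Nonempty (Fin k) := ⟨⟨0, hk⟩⟩
  have hsum : (0:ℝ) < ∑ i, (α i)⁻¹ :=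
    Finset.sum_pos (fun i _ => inv_pos.2 (hα i).1) Finset.univ_nonempty
  have ht0 : 0 < t := by rw [ht]; exact inv_pos.2 hsum
  set w : Fin k → ℝ := fun i => t / α i with hwdef
  have hw0 : ∀ i, 0 < w i := fun i => div_pos ht0 (hα i).1
  have hwsum : ∑ i, w i = 1 := by
    simp only [hwdef, div_eq_mul_inv, ← Finset.mul_sum]
    rw [ht, inv_mul_cancel₀ hsum.ne']
  have hαw : ∀ i, α i * w i = t := fun i =>
    by rw [hwdef]; field_simp [(hα i).1.ne']
  -- key step: the product of admissible bounds is admissible for the product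
  have key : ∀ s : Fin k → ℝ≥0∞,
      (∀ i, s i ≠ 0 ∧ s i ≠ ⊤ ∧
        ∫⁻ ω, ENNReal.ofReal (Real.exp (|X i ω| ^ (α i) / (s i).toReal ^ (α i))) ∂μ ≤ 2) →
      psiNorm μ t (fun ω => ∏ i, X i ω) ≤ ∏ i, s i := by
    intro s hs
    have hs0 : ∀ i, s i ≠ 0 := fun i => (hs i).1
    have hstop : ∀ i, s i ≠ ⊤ := fun i => (hs i).2.1
    set σ : Fin k → ℝ := fun i => (s i).toReal with hσdef
    have hσ : ∀ i, 0 < σ i := fun i => ENNReal.toReal_pos (hs0 i) (hstop i)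
    apply sInf_le
    refine ⟨Finset.prod_ne_zero_iff.mpr (fun i _ => hs0 i),
      (ENNReal.prod_lt_top (fun i _ => (hstop i).lt_top)).ne, ?_⟩
    have hprodReal : (∏ i, s i).toReal = ∏ i, σ i := ENNReal.toReal_prod _ _
    calc ∫⁻ ω, ENNReal.ofReal
          (Real.exp (|∏ i, X i ω| ^ t / (∏ i, s i).toReal ^ t)) ∂μ
        ≤ ∫⁻ ω, ∑ i, ENNReal.ofReal (w i) *
            ENNReal.ofReal (Real.exp (|X i ω| ^ (α i) / σ i ^ (α i))) ∂μ := by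
          apply lintegral_mono
          intro ω
          set x : Fin k → ℝ := fun i => |X i ω| / σ i with hxdef
          have hx0 : ∀ i, 0 ≤ x i := fun i => div_nonneg (abs_nonneg _) (hσ i).le
          have h1 : |∏ i, X i ω| ^ t / (∏ i, s i).toReal ^ t = (∏ i, x i) ^ t := by
            rw [hprodReal, Finset.abs_prod, ← Real.div_rpow
              (Finset.prod_nonneg fun i _ => abs_nonneg _)
              (Finset.prod_nonneg fun i _ => (hσ i).le), ← Finset.prod_div_distrib]
          have h2 : (∏ i, x i) ^ t = ∏ i, (x i ^ (α i)) ^ (w i) := by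
            rw [← Real.finset_prod_rpow _ _ (fun i _ => hx0 i)]
            exact Finset.prod_congr rfl fun i _ => by
              rw [← Real.rpow_mul (hx0 i) (α i) (w i), hαw i]
          have h3 : ∏ i, (x i ^ (α i)) ^ (w i) ≤ ∑ i, w i * (x i ^ (α i)) :=
            Real.geom_mean_le_arith_mean_weighted _ _ _ (fun i _ => (hw0 i).le) hwsum
              (fun i _ => Real.rpow_nonneg (hx0 i) _)
          have h4 : Real.exp (∑ i, w i * (x i ^ (α i))) ≤
              ∑ i, w i * Real.exp (x i ^ (α i)) := by
            have := convexOn_exp.map_sum_le (t := Finset.univ)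
              (w := w) (p := fun i => x i ^ (α i))
              (fun i _ => (hw0 i).le) hwsum (fun i _ => Set.mem_univ _)
            simpa [smul_eq_mul] using this
          have h5 : Real.exp (|∏ i, X i ω| ^ t / (∏ i, s i).toReal ^ t) ≤
              ∑ i, w i * Real.exp (x i ^ (α i)) := by
            refine le_trans ?_ h4
            apply Real.exp_le_exp.2
            rw [h1, h2]; exact h3
          refine le_trans (ENNReal.ofReal_le_ofReal h5) ?_
          rw [ENNReal.ofReal_sum_of_nonneg
            (fun i _ => mul_nonneg (hw0 i).le (Real.exp_pos _).le)]
          apply le_of_eq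
          refine Finset.sum_congr rfl fun i _ => ?_
          rw [ENNReal.ofReal_mul (hw0 i).le]
          congr 2
          rw [hxdef]
          rw [Real.div_rpow (abs_nonneg _) (hσ i).le]
      _ = ∑ i, ENNReal.ofReal (w i) *
            ∫⁻ ω, ENNReal.ofReal (Real.exp (|X i ω| ^ (α i) / σ i ^ (α i))) ∂μ := by
          rw [lintegral_finset_sum]
          · refine Finset.sum_congr rfl fun i _ => ?_
            rw [lintegral_const_mul]
            exact ((((hX i).abs.pow_const _).div_const _).exp).ennreal_ofReal
          · intro i _
            exact (measurable_const.mul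
              ((((hX i).abs.pow_const _).div_const _).exp).ennreal_ofReal)
      _ ≤ ∑ i, ENNReal.ofReal (w i) * 2 := by
          exact Finset.sum_le_sum fun i _ => mul_le_mul_right (hs i).2.2 _
      _ = 2 := by
          rw [← Finset.sum_mul, ← ENNReal.ofReal_sum_of_nonneg
            (fun i _ => (hw0 i).le), hwsum]
          simp
  -- pass to the infimum via an ε-argument
  set a : Fin k → ℝ≥0∞ := fun i => psiNorm μ (α i) (X i) with hadef
  set b : Fin k → ℝ≥0 := fun i => (a i).toNNReal with hbdef
  have hab : ∀ i, a i = (b i : ℝ≥0∞) := fun i => (ENNReal.coe_toNNReal (hfin i)).symm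
  have htend : Filter.Tendsto (fun ε : ℝ≥0 => ((∏ i, (b i + ε) : ℝ≥0) : ℝ≥0∞))
      (nhdsWithin 0 (Set.Ioi 0)) (nhds (∏ i, a i)) := by
    have hc : Continuous fun ε : ℝ≥0 => ((∏ i, (b i + ε) : ℝ≥0) : ℝ≥0∞) :=
      ENNReal.continuous_coe.comp
        (continuous_finset_prod _ fun i _ => continuous_const.add continuous_id)
    have := hc.tendsto 0
    simp only [add_zero] at this
    have heq : ((∏ i, b i : ℝ≥0) : ℝ≥0∞) = ∏ i, a i := by
      rw [ENNReal.coe_finset_prod]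
      exact Finset.prod_congr rfl fun i _ => (hab i).symm
    rw [heq] at this
    exact this.mono_left nhdsWithin_le_nhds
  refine ge_of_tendsto htend ?_
  filter_upwards [self_mem_nhdsWithin] with ε (hε : (0:ℝ≥0) < ε)
  -- for each i pick an admissible s i < a i + ε
  have hlt : ∀ i, sInf {u : ℝ≥0∞ | u ≠ 0 ∧ u ≠ ⊤ ∧
      ∫⁻ ω, ENNReal.ofReal (Real.exp (|X i ω| ^ (α i) / u.toReal ^ (α i))) ∂μ ≤ 2}
      < a i + ε := by
    intro i
    have : sInf {u : ℝ≥0∞ | u ≠ 0 ∧ u ≠ ⊤ ∧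
        ∫⁻ ω, ENNReal.ofReal (Real.exp (|X i ω| ^ (α i) / u.toReal ^ (α i))) ∂μ ≤ 2} = a i :=
      rfl
    rw [this]
    exact ENNReal.lt_add_right (hfin i) (by exact_mod_cast hε.ne')
  have hchoice : ∀ i, ∃ u : ℝ≥0∞, (u ≠ 0 ∧ u ≠ ⊤ ∧
      ∫⁻ ω, ENNReal.ofReal (Real.exp (|X i ω| ^ (α i) / u.toReal ^ (α i))) ∂μ ≤ 2)
      ∧ u < a i + ε := by
    intro i
    obtain ⟨u, hu, hu'⟩ := sInf_lt_iff.1 (hlt i)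
    exact ⟨u, hu, hu'⟩
  choose s hs hslt using hchoice
  calc psiNorm μ t (fun ω => ∏ i, X i ω) ≤ ∏ i, s i := key s hs
    _ ≤ ∏ i, (a i + ε) := Finset.prod_le_prod' fun i _ => (hslt i).le
    _ = ((∏ i, (b i + ε) : ℝ≥0) : ℝ≥0∞) := by
        rw [ENNReal.coe_finset_prod]
        exact Finset.prod_congr rfl fun i _ => by rw [hab i, ENNReal.coe_add]
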